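/- Let a₁₁, a₂₂ > 0 and a₁₂, a₂₁ be real numbers with a₁₂·a₂₁ ≥ 0 and a₁₁a₂₂ − a₁₂a₂₁ > 0, and let ξ ∈ ℝ with ξ ≠ 0. Then every complex root λ of the quadratic polynomial λ² + (a₁₁ξ⁴ + a₂₂ξ²)λ + (a₁₁a₂₂ − a₁₂a₂₁)ξ⁶ is a strictly negative real number. -/
import Mathlib


/-- Under positivity of `a₁₁, a₂₂`, nonnegativity of `a₁₂·a₂₁` and positivity of
the determinant `a₁₁a₂₂ − a₁₂a₂₁`, every complex root of the quadratic
`λ² + (a₁₁ξ⁴ + a₂₂ξ²)λ + (a₁₁a₂₂ − a₁₂a₂₁)ξ⁶` (with `ξ ≠ 0`) is a strictly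
negative real number. -/
theorem stmt_2 (a11 a12 a21 a22 : ℝ) (h11 : 0 < a11) (h22 : 0 < a22)
    (hprod : 0 ≤ a12 * a21) (hd : 0 < a11 * a22 - a12 * a21)
    (ξ : ℝ) (hξ : ξ ≠ 0) (lam : ℂ)
    (hroot : lam ^ 2 + ((a11 * ξ ^ 4 + a22 * ξ ^ 2 : ℝ) : ℂ) * lam
        + (((a11 * a22 - a12 * a21) * ξ ^ 6 : ℝ) : ℂ) = 0) :
    lam.im = 0 ∧ lam.re < 0 := by
  set b : ℝ := a11 * ξ ^ 4 + a22 * ξ ^ 2 with hb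
  set c : ℝ := (a11 * a22 - a12 * a21) * ξ ^ 6 with hc
  have hbpos : 0 < b := by positivity
  have hcpos : 0 < c := by positivity
  have h6 : (0:ℝ) ≤ ξ ^ 6 := by positivity
  have hdisc : 4 * c ≤ b ^ 2 := by
    have := mul_nonneg hprod h6
    nlinarith [sq_nonneg (a11 * ξ ^ 4 - a22 * ξ ^ 2)]
  rw [Complex.ext_iff] at hroot
  simp only [Complex.add_re, Complex.add_im, Complex.mul_re, Complex.mul_im,
    Complex.ofReal_re, Complex.ofReal_im, pow_two, Complex.zero_re,
    Complex.zero_im] at hroot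
  obtain ⟨hre, him⟩ := hroot
  have hy0 : lam.im = 0 := by
    by_contra hy0
    have hysq : 0 < lam.im ^ 2 := by positivity
    have hxr : 2 * lam.re + b = 0 := by
      have h0 : lam.im * (2 * lam.re + b) = 0 := by nlinarith
      rcases mul_eq_zero.mp h0 with h | h
      · exact absurd h hy0
      · exact h
    nlinarith
  refine ⟨hy0, ?_⟩
  rw [hy0] at hre
  nlinarith [sq_nonneg lam.re]
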